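/- Loynes's lemma: Let (Ω, F, P, θ) be an ergodic measure-preserving system with θ invertible, and let Z : Ω → ℝ be integrable with E[Z] < 0. Define W_0 = 0 and W_{n+1} = max(W_n ∘ θ⁻¹ + Z ∘ θ⁻¹, 0). Then (W_n) is nondecreasing a.s. and its a.s. limit W is finite almost surely and satisfies W ∘ θ = max(W + Z, 0) a.s. -/

import Mathlib

open MeasureTheory

private lemma bdd_shift_aux (f : ℕ → ℝ) (c : ℝ)
    (h : BddAbove (Set.range fun k => f (k + 1) - c)) : BddAbove (Set.range f) := by
  obtain ⟨b, hb⟩ := h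
  refine ⟨max (f 0) (b + c), ?_⟩
  rintro _ ⟨k, rfl⟩
  cases k with
  | zero => exact le_max_left _ _
  | succ j =>
    have := hb (Set.mem_range_self j)
    have : f (j + 1) ≤ b + c := by linarith
    exact le_trans this (le_max_right _ _)

/-- Loynes's lemma: θ invertible ergodic measure-preserving, Z integrable
with E[Z] < 0.  With W₀ = 0 and W_{n+1} = max(W_n ∘ θ⁻¹ + Z ∘ θ⁻¹, 0), the sequence (W_n)
is a.s. nondecreasing and converges a.s. to a (finite, ℝ-valued) random variable W
satisfying W ∘ θ = max(W + Z, 0) a.s. -/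
theorem stmt_4 {Ω : Type*} [MeasurableSpace Ω] [Nonempty Ω]
    (P : Measure Ω) [IsProbabilityMeasure P]
    (θ ι : Ω → Ω) (hbij : Function.Bijective θ)
    (hinv₁ : Function.LeftInverse ι θ) (hinv₂ : Function.RightInverse ι θ)
    (hergodic : Ergodic θ P) (hι : MeasurePreserving ι P P)
    (Z : Ω → ℝ) (hZint : Integrable Z P) (hZneg : ∫ ω, Z ω ∂P < 0)
    (W : ℕ → Ω → ℝ) (hW0 : ∀ ω, W 0 ω = 0)
    (hWrec : ∀ n ω, W (n + 1) ω = max (W n (ι ω) + Z (ι ω)) 0) :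
    (∀ᵐ ω ∂P, Monotone fun n => W n ω) ∧
    ∃ Wlim : Ω → ℝ,
      (∀ᵐ ω ∂P, Filter.Tendsto (fun n => W n ω) Filter.atTop (nhds (Wlim ω))) ∧
      (∀ᵐ ω ∂P, Wlim (θ ω) = max (Wlim ω + Z ω) 0) := by
  classical
  have hθ : MeasurePreserving θ P P := hergodic.toMeasurePreserving
  have hθm : Measurable θ := hθ.measurable
  have hιm : Measurable ι := hι.measurable
  let e : Ω ≃ᵐ Ω :=
    { toFun := θ, invFun := ι, left_inv := hinv₁, right_inv := hinv₂,
      measurable_toFun := hθm, measurable_invFun := hιm }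
  -- pointwise monotonicity
  have hstep : ∀ n ω, W n ω ≤ W (n + 1) ω := by
    intro n
    induction n with
    | zero => intro ω; rw [hW0, hWrec]; exact le_max_right _ _
    | succ n ih =>
      intro ω
      rw [hWrec, hWrec]
      exact max_le_max (add_le_add (ih (ι ω)) le_rfl) le_rfl
  have hmono : ∀ ω, Monotone fun n => W n ω := fun ω =>
    monotone_nat_of_le_succ fun n => hstep n ω
  have hWnonneg : ∀ n ω, 0 ≤ W n ω := by
    intro n ω
    have := hmono ω (Nat.zero_le n)
    simpa [hW0] using this
  -- integrability of each W n
  have hWint : ∀ n, Integrable (W n) P := by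
    intro n
    induction n with
    | zero =>
      have h0 : W 0 = fun _ => (0 : ℝ) := funext hW0
      rw [h0]; exact integrable_const 0
    | succ n ih =>
      have hsum : Integrable (fun x => W n x + Z x) P := ih.add hZint
      have h1 : Integrable ((fun x => W n x + Z x) ∘ ι) P :=
        (hι.integrable_comp hsum.1).mpr hsum
      have h2 : Integrable (fun ω => max (W n (ι ω) + Z (ι ω)) 0) P := h1.pos_part
      have h3 : W (n + 1) = fun ω => max (W n (ι ω) + Z (ι ω)) 0 := funext (hWrec n)
      rw [h3]; exact h2
  -- measurable version of Z
  obtain ⟨Z', hZ'm, hZZ'⟩ := hZint.1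
  set S : ℕ → Ω → ℝ := fun k ω => ∑ i ∈ Finset.range k, Z' (ι^[i + 1] ω) with hSdef
  have hSm : ∀ k, Measurable (S k) := fun k =>
    Finset.measurable_sum _ fun i _ => hZ'm.measurable.comp (hιm.iterate (i + 1))
  have hS0 : ∀ ω, S 0 ω = 0 := by intro ω; simp [hSdef]
  have hSshift : ∀ k ω, S k (ι ω) = S (k + 1) ω - Z' (ι ω) := by
    intro k ω
    have h1 : S (k + 1) ω
        = (∑ i ∈ Finset.range k, Z' (ι^[i + 1 + 1] ω)) + Z' (ι^[0 + 1] ω) :=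
      Finset.sum_range_succ' (fun i => Z' (ι^[i + 1] ω)) k
    have h2 : S k (ι ω) = ∑ i ∈ Finset.range k, Z' (ι^[i + 1 + 1] ω) := by
      refine Finset.sum_congr rfl fun i _ => ?_
      simp [Function.iterate_succ_apply]
    rw [h2, h1]
    simp
  -- the a.e. set where Z agrees with Z' along the backward orbit
  have hGood_ae : ∀ᵐ ω ∂P, ∀ j : ℕ, Z (ι^[j + 1] ω) = Z' (ι^[j + 1] ω) := by
    rw [MeasureTheory.ae_all_iff]
    intro j
    exact (hι.iterate (j + 1)).quasiMeasurePreserving.ae_eq_comp hZZ'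
  have hGoodι : ∀ ω, (∀ j : ℕ, Z (ι^[j + 1] ω) = Z' (ι^[j + 1] ω)) →
      ∀ j : ℕ, Z (ι^[j + 1] (ι ω)) = Z' (ι^[j + 1] (ι ω)) := by
    intro ω hg j
    have := hg (j + 1)
    simpa [Function.iterate_succ_apply] using this
  -- W dominates the partial sums
  have haux_le : ∀ k ω, (∀ j : ℕ, Z (ι^[j + 1] ω) = Z' (ι^[j + 1] ω)) → S k ω ≤ W k ω := by
    intro k
    induction k with
    | zero => intro ω _; rw [hS0, hW0]
    | succ k ih =>
      intro ω hg
      have h3 : Z (ι ω) = Z' (ι ω) := by simpa using hg 0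
      have h1 : S (k + 1) ω = S k (ι ω) + Z' (ι ω) := by rw [hSshift]; ring
      rw [h1, hWrec]
      have h2 := ih (ι ω) (hGoodι ω hg)
      have : S k (ι ω) + Z' (ι ω) ≤ W k (ι ω) + Z (ι ω) := by rw [← h3] at *; linarith
      exact le_trans this (le_max_left _ _)
  -- W is a running maximum of the partial sums
  have haux_eq : ∀ n ω, (∀ j : ℕ, Z (ι^[j + 1] ω) = Z' (ι^[j + 1] ω)) →
      ∃ k ≤ n, W n ω = S k ω := by
    intro n
    induction n with
    | zero => intro ω _; exact ⟨0, le_rfl, by rw [hS0, hW0]⟩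
    | succ n ih =>
      intro ω hg
      have h3 : Z (ι ω) = Z' (ι ω) := by simpa using hg 0
      rcases max_cases (W n (ι ω) + Z (ι ω)) 0 with ⟨hmax, _⟩ | ⟨hmax, _⟩
      · obtain ⟨k, hk, hEq⟩ := ih (ι ω) (hGoodι ω hg)
        refine ⟨k + 1, by omega, ?_⟩
        rw [hWrec, hmax, hEq, hSshift, h3]
        ring
      · exact ⟨0, by omega, by rw [hWrec, hmax, hS0]⟩
  -- the (measurable) divergence event
  set A : Set Ω := {ω | ¬ BddAbove (Set.range fun k => S k ω)} with hAdef'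
  have hAiff : ∀ ω, ω ∈ A ↔ ∀ m : ℕ, ∃ k, (m : ℝ) < S k ω := by
    intro ω
    constructor
    · intro h m
      rcases not_bddAbove_iff.mp h (m : ℝ) with ⟨y, ⟨k, rfl⟩, hy⟩
      exact ⟨k, hy⟩
    · intro h hb
      obtain ⟨b, hb'⟩ := hb
      obtain ⟨k, hk⟩ := h ⌈b⌉₊
      have h1 := hb' (Set.mem_range_self (f := fun k => S k ω) k)
      have h2 : b ≤ (⌈b⌉₊ : ℝ) := Nat.le_ceil b
      linarith
  have hAmeas : MeasurableSet A := by
    have : A = ⋂ m : ℕ, ⋃ k : ℕ, {ω | (m : ℝ) < S k ω} := by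
      ext ω
      simp only [Set.mem_iInter, Set.mem_iUnion, Set.mem_setOf_eq]
      exact hAiff ω
    rw [this]
    exact MeasurableSet.iInter fun m =>
      MeasurableSet.iUnion fun k => measurableSet_lt measurable_const (hSm k)
  have hApre : ∀ ω, ι ω ∈ A ↔ ω ∈ A := by
    intro ω
    rw [hAiff, hAiff]
    constructor
    · intro h m
      obtain ⟨m', hm'⟩ := exists_nat_ge ((m : ℝ) - Z' (ι ω))
      obtain ⟨k, hk⟩ := h m'
      rw [hSshift] at hk
      exact ⟨k + 1, by linarith⟩
    · intro h m
      obtain ⟨m', hm'⟩ := exists_nat_ge ((m : ℝ) + Z' (ι ω))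
      obtain ⟨k, hk⟩ := h m'
      cases k with
      | zero =>
        rw [hS0] at hk
        exact absurd hk (Nat.cast_nonneg m').not_gt
      | succ j =>
        refine ⟨j, ?_⟩
        rw [hSshift]
        linarith
  have hAθ : θ ⁻¹' A = A := by
    ext ω
    have := hApre (θ ω)
    rw [hinv₁ ω] at this
    simpa [Set.mem_preimage] using this.symm
  -- ergodicity: P A = 0 or 1; rule out 1
  have hPA : P A = 0 := by
    rcases hergodic.measure_self_or_compl_eq_zero hAmeas hAθ with h | h
    · exact h
    · exfalso
      have hA1 : ∀ᵐ ω ∂P, ω ∈ A := by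
        rw [MeasureTheory.ae_iff]
        exact h
      -- a.e., W n ω → ∞
      have htop : ∀ᵐ ω ∂P, Filter.Tendsto (fun n => W n ω) Filter.atTop Filter.atTop := by
        filter_upwards [hA1, hGood_ae] with ω hωA hg
        refine Filter.tendsto_atTop_atTop_of_monotone (hmono ω) fun b => ?_
        obtain ⟨m, hm⟩ := exists_nat_ge b
        obtain ⟨k, hk⟩ := (hAiff ω).mp hωA m
        exact ⟨k, le_trans (le_trans hm hk.le) (haux_le k ω hg)⟩
      -- the increments
      have hDeq : ∀ n ω, max (Z ω) (-(W n ω)) = W (n + 1) (θ ω) - W n ω := by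
        intro n ω
        have h1 : W (n + 1) (θ ω) = max (W n ω + Z ω) 0 := by
          rw [hWrec, hinv₁ ω]
        rw [h1, ← max_sub_sub_right]
        congr 1
        · ring
        · ring
      have hDint : ∀ n, Integrable (fun ω => max (Z ω) (-(W n ω))) P := by
        intro n
        have hcomp : Integrable (W (n + 1) ∘ θ) P :=
          (hθ.integrable_comp (hWint (n + 1)).1).mpr (hWint (n + 1))
        have : (fun ω => max (Z ω) (-(W n ω))) = fun ω => (W (n + 1) ∘ θ) ω - W n ω :=
          funext fun ω => hDeq n ω
        rw [this]
        exact hcomp.sub (hWint n)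
      have hDnonneg : ∀ n, 0 ≤ ∫ ω, max (Z ω) (-(W n ω)) ∂P := by
        intro n
        have hcomp : Integrable (W (n + 1) ∘ θ) P :=
          (hθ.integrable_comp (hWint (n + 1)).1).mpr (hWint (n + 1))
        have heq : ∫ ω, max (Z ω) (-(W n ω)) ∂P
            = (∫ ω, W (n + 1) (θ ω) ∂P) - ∫ ω, W n ω ∂P := by
          rw [show (fun ω => max (Z ω) (-(W n ω)))
              = fun ω => (W (n + 1) ∘ θ) ω - W n ω from funext fun ω => hDeq n ω]
          exact integral_sub hcomp (hWint n)
        have hcompeq : ∫ ω, W (n + 1) (θ ω) ∂P = ∫ ω, W (n + 1) ω ∂P :=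
          hθ.integral_comp e.measurableEmbedding (W (n + 1))
        rw [heq, hcompeq, sub_nonneg]
        exact integral_mono (hWint n) (hWint (n + 1)) fun ω => hstep n ω
      have hbound : ∀ n, ∀ᵐ ω ∂P, ‖max (Z ω) (-(W n ω))‖ ≤ |Z ω| := by
        intro n
        refine Filter.Eventually.of_forall fun ω => ?_
        rw [Real.norm_eq_abs, abs_le]
        constructor
        · have := neg_abs_le (Z ω); exact le_trans this (le_max_left _ _)
        · have h1 : Z ω ≤ |Z ω| := le_abs_self _
          have h2 : -(W n ω) ≤ |Z ω| := le_trans (by linarith [hWnonneg n ω]) (abs_nonneg (Z ω))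
          exact max_le h1 h2
      have hlim : ∀ᵐ ω ∂P,
          Filter.Tendsto (fun n => max (Z ω) (-(W n ω))) Filter.atTop (nhds (Z ω)) := by
        filter_upwards [htop] with ω hω
        have hev : ∀ᶠ n in Filter.atTop, max (Z ω) (-(W n ω)) = Z ω := by
          filter_upwards [hω.eventually (Filter.eventually_ge_atTop (-(Z ω)))] with n hn
          exact max_eq_left (by linarith)
        exact Filter.Tendsto.congr' (Filter.EventuallyEq.symm hev) tendsto_const_nhds
      have htendint : Filter.Tendsto (fun n => ∫ ω, max (Z ω) (-(W n ω)) ∂P)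
          Filter.atTop (nhds (∫ ω, Z ω ∂P)) :=
        tendsto_integral_of_dominated_convergence (fun ω => |Z ω|)
          (fun n => (hDint n).1) hZint.abs hbound hlim
      have : (0 : ℝ) ≤ ∫ ω, Z ω ∂P := ge_of_tendsto' htendint hDnonneg
      linarith
  -- construct the limit
  refine ⟨Filter.Eventually.of_forall hmono, fun ω => ⨆ n, W n ω, ?_, ?_⟩
  · -- convergence
    have hAc : ∀ᵐ ω ∂P, ω ∉ A := by
      rw [MeasureTheory.ae_iff]
      simpa using hPA
    filter_upwards [hAc, hGood_ae] with ω hωA hg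
    have hbdd : BddAbove (Set.range fun n => W n ω) := by
      have hbS : BddAbove (Set.range fun k => S k ω) := not_not.mp hωA
      obtain ⟨b, hb⟩ := hbS
      refine ⟨b, ?_⟩
      rintro _ ⟨n, rfl⟩
      obtain ⟨k, _, hEq⟩ := haux_eq n ω hg
      simp only
      rw [hEq]
      exact hb (Set.mem_range_self (f := fun k => S k ω) k)
    exact tendsto_atTop_ciSup (hmono ω) hbdd
  · -- the functional equation
    have hAc : ∀ᵐ ω ∂P, ω ∉ A := by
      rw [MeasureTheory.ae_iff]
      simpa using hPA
    have hTend : ∀ᵐ ω ∂P,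
        Filter.Tendsto (fun n => W n ω) Filter.atTop (nhds (⨆ n, W n ω)) := by
      filter_upwards [hAc, hGood_ae] with ω hωA hg
      have hbS : BddAbove (Set.range fun k => S k ω) := not_not.mp hωA
      obtain ⟨b, hb⟩ := hbS
      have hbdd : BddAbove (Set.range fun n => W n ω) := by
        refine ⟨b, ?_⟩
        rintro _ ⟨n, rfl⟩
        obtain ⟨k, _, hEq⟩ := haux_eq n ω hg
        simp only
        rw [hEq]
        exact hb (Set.mem_range_self (f := fun k => S k ω) k)
      exact tendsto_atTop_ciSup (hmono ω) hbdd
    obtain ⟨N, hNsub, hNmeas, hNnull⟩ :=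
      exists_measurable_superset_of_null (MeasureTheory.ae_iff.mp hTend)
    have hθN : P (θ ⁻¹' N) = 0 := by
      rw [hθ.measure_preimage hNmeas.nullMeasurableSet]
      exact hNnull
    have hθTend : ∀ᵐ ω ∂P,
        Filter.Tendsto (fun n => W n (θ ω)) Filter.atTop (nhds (⨆ n, W n (θ ω))) := by
      have hnm : ∀ᵐ ω ∂P, θ ω ∉ N := by
        rw [MeasureTheory.ae_iff]
        refine measure_mono_null ?_ hθN
        intro ω hω
        simpa using hω
      filter_upwards [hnm] with ω hω
      by_contra hcon
      exact hω (hNsub hcon)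
    filter_upwards [hTend, hθTend] with ω h1 h2
    have h3 : Filter.Tendsto (fun n => W (n + 1) (θ ω)) Filter.atTop
        (nhds (⨆ n, W n (θ ω))) :=
      h2.comp (Filter.tendsto_add_atTop_nat 1)
    have h4 : (fun n => W (n + 1) (θ ω)) = fun n => max (W n ω + Z ω) 0 :=
      funext fun n => by rw [hWrec, hinv₁ ω]
    have h5 : Filter.Tendsto (fun n => max (W n ω + Z ω) 0) Filter.atTop
        (nhds (max ((⨆ n, W n ω) + Z ω) 0)) :=
      (h1.add_const (Z ω)).max tendsto_const_nhds
    rw [h4] at h3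
    exact tendsto_nhds_unique h3 h5
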